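/- Let G be a finite group and let ω : G × G → 𝕋 be a 2-cocycle (for the trivial action) whose cohomology class has order exactly n in H²(G,𝕋), i.e. ωⁿ is a coboundary and ω^m is not a coboundary for any 0 < m < n. Then there exist a natural number k ≥ 1, a function μ : G → 𝕋, and a map φ : G → U(n^k) into the group of n^k × n^k complex unitary matrices such that φ(g)·φ(h) = (ω(g,h)·μ(g)·μ(h)·μ(gh)⁻¹) · φ(gh) for all g, h ∈ G. (In other words, G admits a projective unitary representation of dimension a power of n whose lifting obstruction is the class of ω.) -/

import Mathlib

/-- A `Circle`-valued 2-cocycle (trivial action). -/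
def IsMulTwoCocycle {G N : Type*} [Group G] [CommGroup N] (ω : G → G → N) : Prop :=
  ∀ g h k : G, ω g h * ω (g * h) k = ω h k * ω g (h * k)

/-- A `Circle`-valued 2-coboundary (trivial action). -/
def IsMulTwoCoboundary {G N : Type*} [Group G] [CommGroup N] (ω : G → G → N) : Prop :=
  ∃ μ : G → N, ∀ g h : G, ω g h = μ g * μ h * (μ (g * h))⁻¹

section circleAux

lemma circle_exists_pow_eq (n : ℕ) (hn : 0 < n) (z : Circle) : ∃ w : Circle, w ^ n = z := by
  have hpow : ∀ (m : ℕ) (t : ℝ), Circle.exp t ^ m = Circle.exp (m * t) := by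
    intro m t
    induction m with
    | zero => simp
    | succ k ih =>
        rw [pow_succ, ih, ← Circle.exp_add]
        congr 1
        push_cast
        ring
  refine ⟨Circle.exp (Complex.arg z / n), ?_⟩
  rw [hpow]
  have h : (n : ℝ) * (Complex.arg z / n) = Complex.arg z := by
    field_simp
  rw [h, Circle.exp_arg]

lemma circle_pow_eq_one_exists (n : ℕ) [NeZero n] (z : Circle) (hz : z ^ n = 1) :
    ∃ m : ZMod n, ZMod.toCircle m = z := by
  have hpow : ∀ (m : ℕ) (t : ℝ), Circle.exp t ^ m = Circle.exp (m * t) := by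
    intro m t
    induction m with
    | zero => simp
    | succ k ih =>
        rw [pow_succ, ih, ← Circle.exp_add]
        congr 1
        push_cast
        ring
  have hn : (n : ℝ) ≠ 0 := Nat.cast_ne_zero.mpr (NeZero.ne n)
  obtain ⟨t, ht⟩ : ∃ t : ℝ, Circle.exp t = z := ⟨Complex.arg z, Circle.exp_arg z⟩
  have h1 : Circle.exp ((n : ℝ) * t) = 1 := by rw [← hpow, ht, hz]
  obtain ⟨m, hm⟩ := Circle.exp_eq_one.mp h1
  refine ⟨(m : ZMod n), ?_⟩
  apply Circle.ext
  rw [ZMod.toCircle_intCast, ← ht, Circle.coe_exp]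
  have htval : t = (m : ℝ) * (2 * Real.pi) / n := by
    field_simp
    linarith [hm]
  rw [htval]
  congr 1
  push_cast
  ring

end circleAux

section cocycleAux

variable {G : Type*} [Group G] {n : ℕ}

/-- auxiliary permutation-level action -/
def sigAux (w : G → G → ZMod n) (g : G) (f : G → ZMod n) : G → ZMod n :=
  fun x => f (x * g) + w x g + f 1 - f g - w 1 g

/-- auxiliary scalar -/
def scAux (w : G → G → ZMod n) (g : G) (f : G → ZMod n) : ZMod n :=
  f g + w 1 g - f 1

variable {w : G → G → ZMod n}

lemma w_one (hw : ∀ g h k : G, w g h + w (g * h) k = w h k + w g (h * k)) (g : G) :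
    w 1 g = w 1 1 := by
  have h := hw 1 1 g
  simp only [one_mul] at h
  linear_combination -h

lemma sig_comp (hw : ∀ g h k : G, w g h + w (g * h) k = w h k + w g (h * k))
    (g h : G) (f : G → ZMod n) :
    sigAux w g (sigAux w h f) = sigAux w (g * h) f := by
  funext x
  simp only [sigAux, one_mul, mul_assoc]
  linear_combination hw x g h + w_one hw (g * h) - w_one hw g

lemma sc_comp (hw : ∀ g h k : G, w g h + w (g * h) k = w h k + w g (h * k))
    (g h : G) (f : G → ZMod n) :
    scAux w g (sigAux w h f) + scAux w h f = w g h + scAux w (g * h) f := by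
  simp only [scAux, sigAux, one_mul]
  linear_combination w_one hw g - w_one hw (g * h)

lemma sig_inj (w : G → G → ZMod n) (g : G) : Function.Injective (sigAux w g) := by
  intro f f' h
  have H : ∀ x, sigAux w g f x = sigAux w g f' x := fun x => congrFun h x
  simp only [sigAux] at H
  have h1 : f 1 = f' 1 := by
    have h := H 1
    simp only [one_mul] at h
    linear_combination h
  have h2 : f g = f' g := by
    have h := H g⁻¹
    simp only [inv_mul_cancel] at h
    linear_combination (2 : ZMod n) * h1 - h
  funext y
  have h := H (y * g⁻¹)
  simp only [mul_assoc, inv_mul_cancel, mul_one] at h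
  linear_combination h - h1 + h2

end cocycleAux

section matAux

variable {G : Type*} [Group G] [Fintype G] [DecidableEq G] {n : ℕ} [NeZero n]

/-- the projective representation matrix -/
noncomputable def repMat (w : G → G → ZMod n) (g : G) :
    Matrix (G → ZMod n) (G → ZMod n) ℂ :=
  Matrix.of fun f' f => if f' = sigAux w g f then (ZMod.toCircle (scAux w g f) : ℂ) else 0

variable {w : G → G → ZMod n}

lemma repMat_mul (hw : ∀ g h k : G, w g h + w (g * h) k = w h k + w g (h * k)) (g h : G) :
    repMat w g * repMat w h = ((ZMod.toCircle (w g h) : Circle) : ℂ) • repMat w (g * h) := by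
  ext f' f
  rw [Matrix.mul_apply, Finset.sum_eq_single (sigAux w h f)]
  · simp only [repMat, Matrix.of_apply, Matrix.smul_apply, sig_comp hw, if_true]
    by_cases hf : f' = sigAux w (g * h) f
    · rw [if_pos hf, if_pos hf, smul_eq_mul]
      have hkey : ZMod.toCircle (scAux w g (sigAux w h f)) * ZMod.toCircle (scAux w h f)
          = ZMod.toCircle (w g h) * ZMod.toCircle (scAux w (g * h) f) := by
        rw [← AddChar.map_add_eq_mul, ← AddChar.map_add_eq_mul, sc_comp hw]
      exact_mod_cast congrArg (fun z : Circle => (z : ℂ)) hkey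
    · rw [if_neg hf, if_neg hf, smul_zero, zero_mul]
  · intro r _ hr
    simp only [repMat, Matrix.of_apply]
    rw [if_neg hr, mul_zero]
  · intro hmem
    exact absurd (Finset.mem_univ _) hmem

lemma repMat_star_mul (g : G) : star (repMat w g) * repMat w g = 1 := by
  ext f f'
  rw [Matrix.mul_apply, Matrix.one_apply, Finset.sum_eq_single (sigAux w g f')]
  · rw [Matrix.star_apply]
    simp only [repMat, Matrix.of_apply, if_true]
    by_cases hf : f = f'
    · subst hf
      simp only [if_true]
      have hs : star ((ZMod.toCircle (scAux w g f) : Circle) : ℂ)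
          = (((ZMod.toCircle (scAux w g f))⁻¹ : Circle) : ℂ) := by
        rw [Circle.coe_inv_eq_conj, Complex.star_def]
      rw [hs]
      norm_cast
      simp
    · rw [if_neg (fun e : sigAux w g f' = sigAux w g f => hf (sig_inj w g e).symm),
        if_neg hf]
      simp
  · intro r _ hr
    simp only [repMat, Matrix.star_apply, Matrix.of_apply]
    rw [if_neg hr]
    simp
  · intro hmem
    exact absurd (Finset.mem_univ _) hmem

end matAux

/-- if the class of a circle-valued 2-cocycle `ω` on a finite group `G` has
order exactly `n` in `H²(G, 𝕋)`, then `G` admits a projective unitary representation of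
dimension a power of `n` whose lifting obstruction is the class of `ω`. -/
theorem finite_group_projective_rep_of_order
    {G : Type*} [Group G] [Finite G] (n : ℕ) (hnpos : 0 < n)
    (ω : G → G → Circle) (hω : IsMulTwoCocycle ω)
    (hn : IsMulTwoCoboundary (fun g h => (ω g h) ^ n))
    (hmin : ∀ m : ℕ, 0 < m → m < n → ¬ IsMulTwoCoboundary (fun g h => (ω g h) ^ m)) :
    ∃ (k : ℕ) (μ : G → Circle)
      (φ : G → Matrix (Fin (n ^ k)) (Fin (n ^ k)) ℂ),
        1 ≤ k ∧
        (∀ g : G, φ g ∈ Matrix.unitaryGroup (Fin (n ^ k)) ℂ) ∧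
        (∀ g h : G,
          φ g * φ h = ((ω g h * μ g * μ h * (μ (g * h))⁻¹ : Circle) : ℂ) • φ (g * h)) := by
  classical
  haveI : NeZero n := ⟨hnpos.ne'⟩
  haveI := Fintype.ofFinite G
  obtain ⟨ν, hν⟩ := hn
  choose μ₀ hμ₀ using fun g => circle_exists_pow_eq n hnpos (ν g)⁻¹
  -- the modified cocycle has values in n-th roots of unity
  have hω'n : ∀ g h : G, (ω g h * μ₀ g * μ₀ h * (μ₀ (g * h))⁻¹) ^ n = 1 := by
    intro g h
    have h1 : (ω g h) ^ n = ν g * ν h * (ν (g * h))⁻¹ := hν g h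
    have : (ω g h * μ₀ g * μ₀ h * (μ₀ (g * h))⁻¹) ^ n
        = (ω g h) ^ n * (μ₀ g) ^ n * (μ₀ h) ^ n * ((μ₀ (g * h)) ^ n)⁻¹ := by
      rw [mul_pow, mul_pow, mul_pow, inv_pow]
    rw [this, h1, hμ₀, hμ₀, hμ₀]
    apply Circle.ext
    push_cast
    field_simp
  choose w hw' using fun g h =>
    circle_pow_eq_one_exists n (ω g h * μ₀ g * μ₀ h * (μ₀ (g * h))⁻¹) (hω'n g h)
  -- the modified cocycle is a cocycle
  have hω'c : ∀ g h k : G,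
      (ω g h * μ₀ g * μ₀ h * (μ₀ (g * h))⁻¹) * (ω (g * h) k * μ₀ (g * h) * μ₀ k * (μ₀ (g * h * k))⁻¹)
        = (ω h k * μ₀ h * μ₀ k * (μ₀ (h * k))⁻¹) * (ω g (h * k) * μ₀ g * μ₀ (h * k) * (μ₀ (g * (h * k)))⁻¹) := by
    intro g h k
    have key := hω g h k
    apply Circle.ext
    have hassoc : g * h * k = g * (h * k) := mul_assoc g h k
    push_cast
    rw [hassoc]
    have key' : ((ω g h : ℂ)) * (ω (g * h) k : ℂ) = (ω h k : ℂ) * (ω g (h * k) : ℂ) := by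
      exact_mod_cast congrArg (fun z : Circle => (z : ℂ)) key
    field_simp
    linear_combination key'
  have hwadd : ∀ g h k : G, w g h + w (g * h) k = w h k + w g (h * k) := by
    intro g h k
    apply ZMod.injective_toCircle
    rw [AddChar.map_add_eq_mul, AddChar.map_add_eq_mul, hw', hw', hw', hw']
    exact hω'c g h k
  set k := Fintype.card G with hkdef
  have hk : 1 ≤ k := Fintype.card_pos
  have hcard : Fintype.card (G → ZMod n) = n ^ k := by
    rw [Fintype.card_fun, ZMod.card]
  let e : Fin (n ^ k) ≃ (G → ZMod n) := (Fintype.equivFinOfCardEq hcard).symm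
  refine ⟨k, μ₀, fun g => (repMat w g).submatrix e e, hk, ?_, ?_⟩
  · intro g
    rw [Matrix.mem_unitaryGroup_iff']
    rw [Matrix.star_eq_conjTranspose, Matrix.conjTranspose_submatrix,
      Matrix.submatrix_mul_equiv, ← Matrix.star_eq_conjTranspose, repMat_star_mul,
      Matrix.submatrix_one_equiv]
  · intro g h
    rw [Matrix.submatrix_mul_equiv, repMat_mul hwadd g h, Matrix.submatrix_smul, hw']
    rfl
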